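/- arXiv:2012.05484 — 5 statements merged into one kernel-verified Lean document; each statement's English description precedes it below -/
import Mathlib

section
/- In the oligopoly privacy game with payoff u_i(b_i, b_{−i}) = d²b_i/(∑_j b_j)² − C_i(d·b_i/∑_j b_j), where d > 0 and each C_i is continuous, convex, strictly increasing with C_i(0)=0 and C_i(d) < ∞: if b* is a Nash equilibrium, then for every i, ∑_{j≠i} b*_j > 0. -/
/-- Payoff of data holder `i` in the oligopoly privacy game:
`u_i(b) = d² b_i / (∑_j b_j)² − C_i(d b_i / ∑_j b_j)`.
(When `∑_j b_j = 0`, division by zero in Lean gives payoff `0 − C_i 0`,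
matching the convention that a rejected bid yields zero payoff since `C_i 0 = 0`.) -/
noncomputable def payoff {n : ℕ} (d : ℝ) (C : Fin n → ℝ → ℝ) (i : Fin n)
    (b : Fin n → ℝ) : ℝ :=
  d ^ 2 * b i / (∑ j, b j) ^ 2 - C i (d * b i / ∑ j, b j)

/-- `b` is a Nash equilibrium: no unilateral deviation to a nonnegative bid improves
a player's payoff. -/
def IsNash {n : ℕ} (d : ℝ) (C : Fin n → ℝ → ℝ) (b : Fin n → ℝ) : Prop :=
  (∀ i, 0 ≤ b i) ∧
    ∀ i, ∀ x : ℝ, 0 ≤ x → payoff d C i (Function.update b i x) ≤ payoff d C i b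

/-- if `b*` is a Nash equilibrium of the oligopoly privacy game, then
for every `i` the other players' bids sum to a strictly positive number. -/
theorem stmt_6 (n : ℕ) (d : ℝ) (hd : 0 < d) (C : Fin n → ℝ → ℝ)
    (hCcont : ∀ i, ContinuousOn (C i) (Set.Ici 0))
    (hCconv : ∀ i, ConvexOn ℝ (Set.Ici 0) (C i))
    (hCmono : ∀ i, StrictMonoOn (C i) (Set.Ici 0))
    (hC0 : ∀ i, C i 0 = 0)
    (bstar : Fin n → ℝ) (hNash : IsNash d C bstar) :
    ∀ i, 0 < ∑ j ∈ Finset.univ.erase i, bstar j := by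
  intro i
  obtain ⟨hpos, hne⟩ := hNash
  by_contra h
  -- the erased sum is 0
  have hsum0 : ∑ j ∈ Finset.univ.erase i, bstar j = 0 := by
    have : 0 ≤ ∑ j ∈ Finset.univ.erase i, bstar j :=
      Finset.sum_nonneg fun j _ => hpos j
    linarith [not_lt.mp h]
  set P := payoff d C i bstar with hP
  set M : ℝ := max (P + C i d + 1) 1 with hM
  have hM1 : (1:ℝ) ≤ M := le_max_right _ _
  have hMpos : 0 < M := lt_of_lt_of_le one_pos hM1
  set x : ℝ := d ^ 2 / M with hx
  have hxpos : 0 < x := div_pos (pow_pos hd 2) hMpos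
  have hsum : ∑ j, Function.update bstar i x j = x := by
    rw [Finset.erase_eq] at hsum0
    rw [Finset.sum_update_of_mem (Finset.mem_univ i), hsum0, add_zero]
  have hupd : payoff d C i (Function.update bstar i x) = d ^ 2 / x - C i d := by
    unfold payoff
    rw [hsum, Function.update_self, mul_div_cancel_right₀ d hxpos.ne']
    congr 1
    field_simp
  have hkey := hne i x hxpos.le
  rw [hupd] at hkey
  have hdx : d ^ 2 / x = M := by
    rw [hx]
    field_simp
  rw [hdx] at hkey
  have : P + C i d + 1 ≤ M := le_max_left _ _
  linarith
end

section
/- If b* is a Nash equilibrium of the oligopoly privacy game, then for every i, b*_i < ∑_{j≠i} b*_j; consequently each equilibrium supply q*_i = d·b*_i/∑_j b*_j is strictly less than d/2. -/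
/-- Slope lower bound for a convex function: the secant slope over `[y, q0]`
with `q0/2 ≤ y < q0` is at least the secant slope over `[q0/4, q0/2]`. -/
lemma slope_lb (f : ℝ → ℝ) (hconv : ConvexOn ℝ (Set.Ici 0) f) {q0 y : ℝ}
    (hq : 0 < q0) (hy1 : q0 / 2 ≤ y) (hy2 : y < q0) :
    (f (q0 / 2) - f (q0 / 4)) / (q0 / 4) ≤ (f q0 - f y) / (q0 - y) := by
  have h4 : (q0 : ℝ) / 4 ∈ Set.Ici (0 : ℝ) := Set.mem_Ici.mpr (by linarith)
  have h2 : (q0 : ℝ) / 2 ∈ Set.Ici (0 : ℝ) := Set.mem_Ici.mpr (by linarith)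
  have hq0 : (q0 : ℝ) ∈ Set.Ici (0 : ℝ) := Set.mem_Ici.mpr (by linarith)
  have hy : y ∈ Set.Ici (0 : ℝ) := Set.mem_Ici.mpr (by linarith)
  rcases eq_or_lt_of_le hy1 with h | h
  · have := hconv.slope_mono_adjacent h4 hq0 (show q0 / 4 < q0 / 2 by linarith)
      (show q0 / 2 < q0 by linarith)
    have e : q0 / 2 - q0 / 4 = q0 / 4 := by ring
    rw [e] at this
    rw [← h]
    convert this using 2 <;> ring
  · have h1 := hconv.slope_mono_adjacent h4 hy (show q0 / 4 < q0 / 2 by linarith) h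
    have h2' := hconv.slope_mono_adjacent h2 hq0 h hy2
    have e : q0 / 2 - q0 / 4 = q0 / 4 := by ring
    rw [e] at h1
    exact h1.trans h2'

set_option maxHeartbeats 1000000 in
/-- at a Nash equilibrium `b*`, every player's bid is strictly less
than the sum of the others' bids, and hence each equilibrium supply
`q*_i = d b*_i / ∑_j b*_j` is strictly less than `d/2`. -/
theorem stmt_8 (n : ℕ) (hn : 3 ≤ n) (d : ℝ) (hd : 0 < d) (C : Fin n → ℝ → ℝ)
    (hCdiff : ∀ i, DifferentiableOn ℝ (C i) (Set.Ici 0))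
    (hCconv : ∀ i, ConvexOn ℝ (Set.Ici 0) (C i))
    (hCmono : ∀ i, StrictMonoOn (C i) (Set.Ici 0))
    (hC0 : ∀ i, C i 0 = 0)
    (bstar : Fin n → ℝ) (hNash : IsNash d C bstar) :
    ∀ i, bstar i < (∑ j ∈ Finset.univ.erase i, bstar j) ∧
      d * bstar i / (∑ j, bstar j) < d / 2 := by
  obtain ⟨hpos, hopt⟩ := hNash
  intro i
  set s : ℝ := ∑ j ∈ Finset.univ.erase i, bstar j with hs
  set b : ℝ := bstar i with hbdef
  have hs0 : 0 ≤ s := Finset.sum_nonneg fun j _ => hpos j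
  have hb0 : 0 ≤ b := hpos i
  have hsum : ∑ j, bstar j = b + s :=
    (Finset.add_sum_erase _ _ (Finset.mem_univ i)).symm
  clear_value s b
  have hopt' : ∀ x : ℝ, 0 ≤ x →
      d ^ 2 * x / (x + s) ^ 2 - C i (d * x / (x + s)) ≤
        d ^ 2 * b / (b + s) ^ 2 - C i (d * b / (b + s)) := by
    intro x hx
    have h := hopt i x hx
    have hsum' : ∑ j, Function.update bstar i x j = x + s := by
      rw [Finset.sum_update_of_mem (Finset.mem_univ i), ← Finset.erase_eq, ← hs]
    unfold payoff at h
    rw [hsum', hsum, Function.update_self, ← hbdef] at h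
    exact h
  have key : b < s := by
    rcases eq_or_lt_of_le hs0 with hs0' | hspos
    · -- s = 0 : contradiction
      exfalso
      rcases eq_or_lt_of_le hb0 with hb' | hbpos
      · -- b = 0
        set x : ℝ := d ^ 2 / (|C i d| + 1) with hxdef
        have habs : 0 < |C i d| + 1 := by positivity
        have hx : 0 < x := by positivity
        have h1 := hopt' x hx.le
        rw [← hs0', ← hb'] at h1
        have hxne : x ≠ 0 := ne_of_gt hx
        have e1 : d * x / (x + 0) = d := by field_simp; ring
        have e2 : d ^ 2 * x / (x + 0) ^ 2 = |C i d| + 1 := by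
          rw [add_zero]
          rw [hxdef]
          field_simp
        rw [e1, e2] at h1
        simp only [mul_zero, zero_div, zero_add, add_zero] at h1
        norm_num [hC0 i] at h1
        have := le_abs_self (C i d)
        linarith
      · -- b > 0, s = 0 : deviate to b/2
        have h1 := hopt' (b / 2) (by linarith)
        rw [← hs0'] at h1
        have hbne : b ≠ 0 := ne_of_gt hbpos
        have e1 : d * (b / 2) / (b / 2 + 0) = d := by field_simp; ring
        have e2 : d * b / (b + 0) = d := by field_simp; ring
        have e3 : d ^ 2 * (b / 2) / (b / 2 + 0) ^ 2 = 2 * (d ^ 2 / b) := by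
          field_simp
          ring
        have e4 : d ^ 2 * b / (b + 0) ^ 2 = d ^ 2 / b := by
          field_simp
          ring
        rw [e1, e2, e3, e4] at h1
        have : 0 < d ^ 2 / b := by positivity
        linarith
    · -- s > 0
      rcases lt_trichotomy b s with h | h | h
      · exact h
      · -- b = s : contradiction via small downward deviation
        exfalso
        set q0 : ℝ := d / 2 with hq0def
        have hq0 : 0 < q0 := by rw [hq0def]; positivity
        clear_value q0
        set m : ℝ := (C i (q0 / 2) - C i (q0 / 4)) / (q0 / 4) with hmdef
        have hm : 0 < m := by
          apply div_pos _ (by positivity)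
          have := hCmono i (show q0 / 4 ∈ Set.Ici (0:ℝ) by
              simp; positivity)
            (show q0 / 2 ∈ Set.Ici (0:ℝ) by simp; positivity)
            (by linarith)
          linarith
        clear_value m
        set ε : ℝ := min s (m * s ^ 2 / d) / 2 with hεdef
        have hε : 0 < ε := by
          apply div_pos _ two_pos
          apply lt_min hspos (by positivity)
        clear_value ε
        have hεs : ε ≤ s / 2 := by
          have := min_le_left s (m * s ^ 2 / d)
          rw [hεdef]; linarith
        have hεm : ε ≤ m * s ^ 2 / (2 * d) := by
          have h' := min_le_right s (m * s ^ 2 / d)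
          have e : m * s ^ 2 / d / 2 = m * s ^ 2 / (2 * d) := by ring
          rw [hεdef, ← e]
          linarith
        set x : ℝ := s - ε with hxdef
        have hx0 : 0 ≤ x := by rw [hxdef]; linarith
        have ht : x + s = 2 * s - ε := by rw [hxdef]; ring
        clear_value x
        have htpos : 0 < 2 * s - ε := by linarith
        have h1 := hopt' x hx0
        have hsne : s ≠ 0 := ne_of_gt hspos
        have e1 : d * b / (b + s) = q0 := by
          rw [h, hq0def]; field_simp; ring
        have e2 : d ^ 2 * b / (b + s) ^ 2 = d ^ 2 / (4 * s) := by
          rw [h]; field_simp; ring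
        rw [e1, e2] at h1
        have hy1 : q0 / 2 ≤ d * x / (x + s) := by
          rw [ht, hxdef, hq0def, div_div,
            div_le_div_iff₀ (by norm_num : (0:ℝ) < 2 * 2) htpos]
          nlinarith [mul_nonneg hd.le (show (0:ℝ) ≤ 2 * s - 3 * ε by linarith)]
        have hy2 : d * x / (x + s) < q0 := by
          rw [ht, hxdef, hq0def, div_lt_div_iff₀ htpos two_pos]
          nlinarith [mul_pos hd hε]
        have hslope := slope_lb (C i) (hCconv i) hq0 hy1 hy2
        rw [← hmdef] at hslope
        have hgappos : 0 < q0 - d * x / (x + s) := by linarith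
        have Cgap : m * (q0 - d * x / (x + s)) ≤ C i q0 - C i (d * x / (x + s)) :=
          (le_div_iff₀ hgappos).mp hslope
        have hyval : q0 - d * x / (x + s) = d * ε / (2 * (2 * s - ε)) := by
          rw [ht, hxdef, hq0def]
          field_simp
          ring
        have floss : d ^ 2 / (4 * s) - d ^ 2 * x / (x + s) ^ 2 =
            d ^ 2 * ε ^ 2 / (4 * s * (2 * s - ε) ^ 2) := by
          rw [ht, hxdef, div_sub_div _ _ (mul_pos four_pos hspos).ne' (pow_pos htpos 2).ne',
            div_eq_div_iff (mul_ne_zero (mul_pos four_pos hspos).ne' (pow_pos htpos 2).ne')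
              (mul_pos (mul_pos four_pos hspos) (pow_pos htpos 2)).ne']
          ring
        have hεd : ε * (2 * d) ≤ m * s ^ 2 :=
          (le_div_iff₀ (by positivity)).mp hεm
        have hcore : d * ε < 2 * m * s * (2 * s - ε) := by
          nlinarith [mul_le_mul_of_nonneg_left (show s ≤ 2 * s - ε by linarith)
            (le_of_lt (mul_pos hm hspos)), mul_pos hd hε]
        have hfinal : d ^ 2 * ε ^ 2 / (4 * s * (2 * s - ε) ^ 2) <
            m * (d * ε / (2 * (2 * s - ε))) := by
          rw [show m * (d * ε / (2 * (2 * s - ε))) =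
              m * d * ε / (2 * (2 * s - ε)) by ring,
            div_lt_div_iff₀ (by positivity) (by positivity)]
          nlinarith [mul_pos (mul_pos (mul_pos hd hε) htpos)
            (show (0:ℝ) < 2 * m * s * (2 * s - ε) - d * ε by linarith)]
        rw [hyval] at Cgap
        linarith
      · -- b > s : deviate to s
        exfalso
        have h1 := hopt' s hs0
        have hsne : s ≠ 0 := ne_of_gt hspos
        have e1 : d * s / (s + s) = d / 2 := by field_simp; ring
        have e2 : d ^ 2 * s / (s + s) ^ 2 = d ^ 2 / (4 * s) := by
          field_simp; ring
        rw [e1, e2] at h1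
        have hbspos : 0 < b + s := by linarith
        have hq : d / 2 < d * b / (b + s) := by
          rw [div_lt_div_iff₀ two_pos hbspos]
          nlinarith
        have hC : C i (d / 2) < C i (d * b / (b + s)) :=
          hCmono i (show d / 2 ∈ Set.Ici (0:ℝ) by simp; positivity)
            (show d * b / (b + s) ∈ Set.Ici (0:ℝ) by
              simp; positivity) hq
        have hf : d ^ 2 * b / (b + s) ^ 2 < d ^ 2 / (4 * s) := by
          rw [div_lt_div_iff₀ (by positivity) (by positivity)]
          nlinarith [mul_pos (pow_pos hd 2) (pow_pos (show (0:ℝ) < b - s by linarith) 2)]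
        linarith
  refine ⟨key, ?_⟩
  have hspos : 0 < s := lt_of_le_of_lt hb0 key
  have hS : 0 < b + s := by linarith
  rw [hsum, div_lt_div_iff₀ hS two_pos]
  nlinarith
end

section
/- When n = 2, the oligopoly privacy game has no Nash equilibrium. -/
open Set

lemma sum_two (b : Fin 2 → ℝ) (i j : Fin 2) (hij : i ≠ j) :
    ∑ k, b k = b i + b j := by
  fin_cases i <;> fin_cases j <;> simp_all [Fin.sum_univ_two, add_comm]

lemma payoff_update (d : ℝ) (C : Fin 2 → ℝ → ℝ) (b : Fin 2 → ℝ)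
    (i j : Fin 2) (hij : i ≠ j) (x : ℝ) :
    payoff d C i (Function.update b i x)
      = d ^ 2 * x / (x + b j) ^ 2 - C i (d * x / (x + b j)) := by
  have h1 : Function.update b i x i = x := Function.update_self i x b
  have h2 : Function.update b i x j = b j := Function.update_of_ne hij.symm x b
  rw [payoff, sum_two _ i j hij, h1, h2]

lemma payoff_self (d : ℝ) (C : Fin 2 → ℝ → ℝ) (b : Fin 2 → ℝ)
    (i j : Fin 2) (hij : i ≠ j) :
    payoff d C i b
      = d ^ 2 * b i / (b i + b j) ^ 2 - C i (d * b i / (b i + b j)) := by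
  rw [payoff, sum_two _ i j hij]

lemma derivC_pos (f : ℝ → ℝ) (hdiff : DifferentiableOn ℝ f (Set.Ici 0))
    (hconv : ConvexOn ℝ (Set.Ici 0) f) (hmono : StrictMonoOn f (Set.Ici 0))
    (hf0 : f 0 = 0) {q : ℝ} (hq : 0 < q) : 0 < deriv f q := by
  have hdA : DifferentiableAt ℝ f q :=
    (hdiff q hq.le).differentiableAt (Ici_mem_nhds hq)
  have hs := hconv.slope_le_deriv (self_mem_Ici) (le_of_lt hq : q ∈ Ici (0:ℝ)) hq hdA
  have hfq : 0 < f q := by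
    have := hmono self_mem_Ici (le_of_lt hq : q ∈ Ici (0:ℝ)) hq
    simpa [hf0] using this
  have hslope : 0 < slope f 0 q := by
    rw [slope_def_field, hf0, sub_zero, sub_zero]
    exact div_pos hfq hq
  linarith

lemma key_lt (d : ℝ) (hd : 0 < d) (C : Fin 2 → ℝ → ℝ)
    (hCdiff : ∀ i, DifferentiableOn ℝ (C i) (Set.Ici 0))
    (hCconv : ∀ i, ConvexOn ℝ (Set.Ici 0) (C i))
    (hCmono : ∀ i, StrictMonoOn (C i) (Set.Ici 0))
    (hC0 : ∀ i, C i 0 = 0) (b : Fin 2 → ℝ) (hN : IsNash d C b)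
    (i j : Fin 2) (hij : i ≠ j) (hi : 0 < b i) (hj : 0 < b j) : b i < b j := by
  obtain ⟨hpos, hopt⟩ := hN
  set a := b i with ha
  set B := b j with hB
  have hS0 : (0:ℝ) < a + B := by positivity
  set φ : ℝ → ℝ := fun x => d ^ 2 * x / (x + B) ^ 2 - C i (d * x / (x + B)) with hφ
  have hφopt : ∀ x, 0 ≤ x → φ x ≤ φ a := by
    intro x hx
    have h := hopt i x hx
    rw [payoff_update d C b i j hij x, payoff_self d C b i j hij] at h
    exact h
  have hlm : IsLocalMax φ a := by
    filter_upwards [eventually_gt_nhds hi] with x hx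
    exact hφopt x hx.le
  set q : ℝ := d * a / (a + B) with hqdef
  have hq : 0 < q := by positivity
  set E : ℝ := deriv (C i) q with hE
  have hEpos : 0 < E := derivC_pos (C i) (hCdiff i) (hCconv i) (hCmono i) (hC0 i) hq
  -- derivative of the fraction part
  have h1 : HasDerivAt (fun x : ℝ => d ^ 2 * x) (d ^ 2) a := by
    simpa using (hasDerivAt_id a).const_mul (d ^ 2)
  have h4 : HasDerivAt (fun x : ℝ => x + B) 1 a := (hasDerivAt_id a).add_const B
  have h2 : HasDerivAt (fun x : ℝ => (x + B) ^ 2) (2 * (a + B) ^ 1 * 1) a := by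
    simpa using h4.fun_pow 2
  have hfrac : HasDerivAt (fun x : ℝ => d ^ 2 * x / (x + B) ^ 2)
      ((d ^ 2 * (a + B) ^ 2 - d ^ 2 * a * (2 * (a + B) ^ 1 * 1)) / ((a + B) ^ 2) ^ 2) a :=
    h1.div h2 (by positivity)
  have h3 : HasDerivAt (fun x : ℝ => d * x) d a := by
    simpa using (hasDerivAt_id a).const_mul d
  have hqd : HasDerivAt (fun x : ℝ => d * x / (x + B))
      ((d * (a + B) - d * a * 1) / (a + B) ^ 2) a := h3.div h4 hS0.ne'
  have hCq : HasDerivAt (C i) E q :=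
    ((hCdiff i q hq.le).differentiableAt (Ici_mem_nhds hq)).hasDerivAt
  have hcomp : HasDerivAt (fun x : ℝ => C i (d * x / (x + B)))
      (E * ((d * (a + B) - d * a * 1) / (a + B) ^ 2)) a := by
    exact HasDerivAt.comp a hCq hqd
  have hφd : HasDerivAt φ
      ((d ^ 2 * (a + B) ^ 2 - d ^ 2 * a * (2 * (a + B) ^ 1 * 1)) / ((a + B) ^ 2) ^ 2
        - E * ((d * (a + B) - d * a * 1) / (a + B) ^ 2)) a := hfrac.sub hcomp
  have hzero : (d ^ 2 * (a + B) ^ 2 - d ^ 2 * a * (2 * (a + B) ^ 1 * 1)) / ((a + B) ^ 2) ^ 2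
        - E * ((d * (a + B) - d * a * 1) / (a + B) ^ 2) = 0 := by
    rw [← hφd.deriv]
    exact hlm.deriv_eq_zero
  have hSne : (a + B) ≠ 0 := hS0.ne'
  rw [sub_eq_zero] at hzero
  field_simp at hzero
  by_contra hcon
  push_neg at hcon
  have h' : B - a ≤ 0 := by linarith
  have hRHS : 0 < E * (d * (a + B) - d * a) * ((a + B) ^ 2) ^ 2 := by
    have he : d * (a + B) - d * a = d * B := by ring
    rw [he]; positivity
  have hLid : (d ^ 2 * (a + B) ^ 2 - d ^ 2 * a * (2 * (a + B))) * (a + B) ^ 2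
      = d ^ 2 * (a + B) ^ 3 * (B - a) := by ring
  have hLHS : (d ^ 2 * (a + B) ^ 2 - d ^ 2 * a * (2 * (a + B))) * (a + B) ^ 2 ≤ 0 := by
    rw [hLid]
    exact mul_nonpos_of_nonneg_of_nonpos (by positivity) h'
  nlinarith [mul_pos (mul_pos hS0 hEpos) hj, mul_nonpos_of_nonneg_of_nonpos hd.le h']

/-- with `n = 2` data holders, the oligopoly privacy game has no
Nash equilibrium. -/
theorem stmt_9 (d : ℝ) (hd : 0 < d) (C : Fin 2 → ℝ → ℝ)
    (hCdiff : ∀ i, DifferentiableOn ℝ (C i) (Set.Ici 0))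
    (hCconv : ∀ i, ConvexOn ℝ (Set.Ici 0) (C i))
    (hCmono : ∀ i, StrictMonoOn (C i) (Set.Ici 0))
    (hC0 : ∀ i, C i 0 = 0) :
    ¬ ∃ b : Fin 2 → ℝ, IsNash d C b := by
  rintro ⟨b, hN⟩
  obtain ⟨hpos, hopt⟩ := hN
  -- helper: one player positive, the other zero is impossible
  have hone : ∀ i j : Fin 2, i ≠ j → 0 < b i → b j = 0 → False := by
    intro i j hij hi hj
    have ha : b i ≠ 0 := hi.ne'
    have h := hopt i (b i / 2) (by positivity)
    rw [payoff_update d C b i j hij, payoff_self d C b i j hij, hj] at h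
    have e1 : d * (b i / 2) / (b i / 2 + 0) = d := by
      rw [add_zero]; field_simp
    have e2 : d ^ 2 * (b i / 2) / (b i / 2 + 0) ^ 2 = 2 * (d ^ 2 / b i) := by
      rw [add_zero]; field_simp
    have e3 : d * b i / (b i + 0) = d := by rw [add_zero]; field_simp
    have e4 : d ^ 2 * b i / (b i + 0) ^ 2 = d ^ 2 / b i := by
      rw [add_zero]; field_simp
    rw [e1, e2, e3, e4] at h
    have : 0 < d ^ 2 / b i := by positivity
    linarith
  rcases eq_or_lt_of_le (hpos 0) with h0 | h0
  · rcases eq_or_lt_of_le (hpos 1) with h1 | h1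
    · -- both zero
      have hCd : 0 < C 0 d := by
        have := hCmono 0 self_mem_Ici hd.le hd
        simpa [hC0 0] using this
      set x : ℝ := d ^ 2 / (C 0 d + 1) with hx
      have hxpos : 0 < x := by positivity
      have h := hopt 0 x hxpos.le
      rw [payoff_update d C b 0 1 (by decide), payoff_self d C b 0 1 (by decide),
        ← h0, ← h1] at h
      have e1 : d * x / (x + 0) = d := by rw [add_zero]; field_simp
      have e2 : d ^ 2 * x / (x + 0) ^ 2 = C 0 d + 1 := by
        rw [add_zero, hx]; field_simp
      have e3 : d * (0:ℝ) / ((0:ℝ) + 0) = 0 := by simp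
      have e4 : d ^ 2 * (0:ℝ) / ((0:ℝ) + 0) ^ 2 = 0 := by simp
      rw [e1, e2, e3, e4, hC0 0] at h
      linarith
    · exact hone 1 0 (by decide) h1 h0.symm
  · rcases eq_or_lt_of_le (hpos 1) with h1 | h1
    · exact hone 0 1 (by decide) h0 h1.symm
    · have k01 := key_lt d hd C hCdiff hCconv hCmono hC0 b ⟨hpos, hopt⟩ 0 1 (by decide) h0 h1
      have k10 := key_lt d hd C hCdiff hCconv hCmono hC0 b ⟨hpos, hopt⟩ 1 0 (by decide) h1 h0
      linarith
end

section
/- For a convex, strictly increasing, differentiable cost function C with C(0) = 0 and C'(0) > 0, define D(q) = (1 + q/(d − 2q))·C(q) − ∫_0^q d/(d − 2x)² · C(x) dx on [0, d/2). Then D is differentiable with D'(q) = (1 + q/(d − 2q))·C'(q), and D is strictly increasing and strictly convex on [0, d/2). -/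
open intervalIntegral

/-- for a convex, strictly increasing, differentiable cost `C` with
`C 0 = 0` and `C' 0 > 0`, the effective cost
`D(q) = (1 + q/(d − 2q)) C(q) − ∫_0^q d/(d − 2x)² C(x) dx`
is differentiable on `[0, d/2)` with `D'(q) = (1 + q/(d − 2q)) C'(q)`, and `D` is
strictly increasing and strictly convex on `[0, d/2)`. -/
theorem stmt_10 (d : ℝ) (hd : 0 < d) (C : ℝ → ℝ)
    (hCdiff : Differentiable ℝ C)
    (hCconv : ConvexOn ℝ (Set.Ici 0) C)
    (hCmono : StrictMonoOn C (Set.Ici 0))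
    (hC0 : C 0 = 0) (hC'0 : 0 < deriv C 0)
    (D : ℝ → ℝ)
    (hD : ∀ q ∈ Set.Ico 0 (d / 2),
      D q = (1 + q / (d - 2 * q)) * C q - ∫ x in (0 : ℝ)..q, d / (d - 2 * x) ^ 2 * C x) :
    (∀ q ∈ Set.Ico 0 (d / 2),
        HasDerivWithinAt D ((1 + q / (d - 2 * q)) * deriv C q) (Set.Ico 0 (d / 2)) q) ∧
      StrictMonoOn D (Set.Ico 0 (d / 2)) ∧
      StrictConvexOn ℝ (Set.Ico 0 (d / 2)) D := by
  set s : Set ℝ := Set.Ico 0 (d / 2) with hs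
  set f : ℝ → ℝ := fun x => d / (d - 2 * x) ^ 2 * C x with hf
  have hdq : ∀ q ∈ Set.Iio (d / 2), 0 < d - 2 * q := by
    intro q hq; simp only [Set.mem_Iio] at hq; linarith
  have hfc : ContinuousOn f (Set.Iio (d / 2)) := by
    apply ContinuousOn.mul
    · apply ContinuousOn.div continuousOn_const (by fun_prop)
      intro x hx
      have := hdq x hx
      positivity
    · exact hCdiff.continuous.continuousOn
  -- monotonicity of deriv C
  have hmonoC' : MonotoneOn (deriv C) (Set.Ici 0) :=
    hCconv.monotoneOn_deriv fun x _ => hCdiff x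
  have hC'pos : ∀ x : ℝ, 0 ≤ x → 0 < deriv C x := fun x hx =>
    lt_of_lt_of_le hC'0 (hmonoC' Set.self_mem_Ici hx hx)
  -- derivative of the explicit formula
  have key : ∀ q ∈ s, HasDerivAt
      (fun q => (1 + q / (d - 2 * q)) * C q - ∫ x in (0 : ℝ)..q, f x)
      ((1 + q / (d - 2 * q)) * deriv C q) q := by
    intro q hq
    have hq0 : (0 : ℝ) ≤ q := hq.1
    have hq2 : q < d / 2 := hq.2
    have hne : d - 2 * q > 0 := hdq q hq2
    have h1 : HasDerivAt (fun q : ℝ => 1 + q / (d - 2 * q)) (d / (d - 2 * q) ^ 2) q := by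
      have hden : HasDerivAt (fun q : ℝ => d - 2 * q) (-2) q := by
        simpa using ((hasDerivAt_id' q).const_mul 2).const_sub d
      have := ((hasDerivAt_id q).div hden hne.ne')
      have h := (hasDerivAt_const q (1 : ℝ)).add this
      refine h.congr_deriv ?_
      simp only [id, zero_add]
      congr 1
      ring
    have h2 : HasDerivAt (fun q : ℝ => (1 + q / (d - 2 * q)) * C q)
        (d / (d - 2 * q) ^ 2 * C q + (1 + q / (d - 2 * q)) * deriv C q) q :=
      h1.mul (hCdiff q).hasDerivAt
    have hint : IntervalIntegrable f MeasureTheory.volume 0 q := by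
      apply ContinuousOn.intervalIntegrable
      apply hfc.mono
      rw [Set.uIcc_of_le hq0]
      intro x hx
      exact lt_of_le_of_lt hx.2 hq2
    have hcont : ContinuousAt f q := hfc.continuousAt (Iio_mem_nhds hq2)
    have hmeas : StronglyMeasurableAtFilter f (nhds q) :=
      ⟨Set.Iio (d / 2), Iio_mem_nhds hq2, hfc.aestronglyMeasurable measurableSet_Iio⟩
    have h3 : HasDerivAt (fun u => ∫ x in (0 : ℝ)..u, f x) (f q) q :=
      intervalIntegral.integral_hasDerivAt_right hint hmeas hcont
    have h4 := h2.sub h3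
    refine h4.congr_deriv ?_
    simp only [hf]
    ring
  have hder : ∀ q ∈ s,
      HasDerivWithinAt D ((1 + q / (d - 2 * q)) * deriv C q) s q := by
    intro q hq
    exact ((key q hq).hasDerivWithinAt).congr (fun y hy => hD y hy) (hD q hq)
  have hcontD : ContinuousOn D s := fun q hq => (hder q hq).continuousWithinAt
  have hconv : Convex ℝ s := convex_Ico 0 (d / 2)
  have hint : interior s = Set.Ioo 0 (d / 2) := interior_Ico
  -- deriv D on interior
  have hderivD : ∀ x ∈ Set.Ioo 0 (d / 2),
      deriv D x = (1 + x / (d - 2 * x)) * deriv C x := by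
    intro x hx
    have hxs : x ∈ s := ⟨hx.1.le, hx.2⟩
    have hnhds : s ∈ nhds x := by
      rw [hs]
      exact Ico_mem_nhds hx.1 hx.2
    exact ((hder x hxs).hasDerivAt hnhds).deriv
  have hgpos : ∀ x : ℝ, 0 ≤ x → x < d / 2 → (1 : ℝ) ≤ 1 + x / (d - 2 * x) := by
    intro x hx0 hx2
    have h := hdq x hx2
    have : 0 ≤ x / (d - 2 * x) := div_nonneg hx0 h.le
    linarith
  have hDpos : ∀ x ∈ interior s, 0 < deriv D x := by
    rw [hint]
    intro x hx
    rw [hderivD x hx]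
    have h1 := hgpos x hx.1.le hx.2
    have h2 := hC'pos x hx.1.le
    nlinarith
  refine ⟨hder, strictMonoOn_of_deriv_pos hconv hcontD hDpos, ?_⟩
  apply StrictMonoOn.strictConvexOn_of_deriv hconv hcontD
  rw [hint]
  intro x hx y hy hxy
  rw [hderivD x hx, hderivD y hy]
  have hdx := hdq x (Set.mem_Iio.2 hx.2)
  have hdy := hdq y (Set.mem_Iio.2 hy.2)
  have hg : 1 + x / (d - 2 * x) < 1 + y / (d - 2 * y) := by
    have : x / (d - 2 * x) < y / (d - 2 * y) := by
      rw [div_lt_div_iff₀ hdx hdy]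
      nlinarith
    linarith
  have hgx := hgpos x hx.1.le hx.2
  have hC'x := hC'pos x hx.1.le
  have hC'y := hC'pos y hy.1.le
  have hC'le : deriv C x ≤ deriv C y := hmonoC' hx.1.le hy.1.le hxy.le
  calc (1 + x / (d - 2 * x)) * deriv C x
      ≤ (1 + x / (d - 2 * x)) * deriv C y := by nlinarith
    _ < (1 + y / (d - 2 * y)) * deriv C y := by nlinarith
end

section
/- Suppose all n ≥ 3 data holders share the same strictly convex, strictly increasing, differentiable cost function C with C(0) = 0. Then the unique PCE allocation and the unique ONE allocation are both the symmetric allocation q_i = d/n for all i, and hence the total costs coincide: C* = C̄ = n·C(d/n). Moreover the equilibrium prices satisfy p* = ((n−1)/(n−2))·p̄, where p̄ = C'(d/n) and p* = (1 + (d/n)/(d − 2d/n))·C'(d/n), so p*/p̄ → 1 as n → ∞. -/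
open Filter

/-- Strict Jensen helper for the uniform allocation. -/
lemma jensen_unif {n : ℕ} (hn : 0 < n) {s : Set ℝ} {f : ℝ → ℝ}
    (hf : StrictConvexOn ℝ s f) (q : Fin n → ℝ) (hq : ∀ i, q i ∈ s) {d : ℝ}
    (hsum : ∑ i, q i = d) (hne : q ≠ fun _ => d / n) :
    ∑ _i : Fin n, f (d / n) < ∑ i, f (q i) := by
  have hn0 : ((n : ℝ)) ≠ 0 := Nat.cast_ne_zero.mpr hn.ne'
  have hw : ∀ i ∈ (Finset.univ : Finset (Fin n)), (0:ℝ) < (n : ℝ)⁻¹ := by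
    intro i _
    positivity
  have hw1 : ∑ _i : Fin n, ((n:ℝ))⁻¹ = 1 := by
    simp [Finset.sum_const, hn0]
  have hp : ∃ j ∈ (Finset.univ : Finset (Fin n)), ∃ k ∈ (Finset.univ : Finset (Fin n)),
      q j ≠ q k := by
    by_contra h
    push_neg at h
    apply hne
    have i0 : Fin n := ⟨0, hn⟩
    have hconst : ∀ i, q i = q i0 := fun i => h i (Finset.mem_univ _) i0 (Finset.mem_univ _)
    have : (n : ℝ) * q i0 = d := by
      rw [← hsum]
      rw [Finset.sum_congr rfl fun i _ => hconst i]
      simp [mul_comm]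
    funext i
    rw [hconst i]
    field_simp
    linarith
  have key := hf.map_sum_lt hw (by simpa using hw1) (fun i _ => hq i) hp
  have hsmul : ∑ i : Fin n, ((n:ℝ))⁻¹ • q i = d / n := by
    simp only [smul_eq_mul, ← Finset.mul_sum, hsum]
    rw [inv_mul_eq_div]
  rw [hsmul] at key
  have : (n:ℝ) * f (d / n) < (n:ℝ) * ∑ i, ((n:ℝ))⁻¹ • f (q i) := by
    apply mul_lt_mul_of_pos_left key
    positivity
  calc ∑ _i : Fin n, f (d / n) = (n:ℝ) * f (d / n) := by
        simp [Finset.sum_const, mul_comm]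
    _ < (n:ℝ) * ∑ i, ((n:ℝ))⁻¹ • f (q i) := this
    _ = ∑ i, f (q i) := by
        simp only [smul_eq_mul, ← Finset.mul_sum]
        rw [← mul_assoc, mul_inv_cancel₀ hn0, one_mul]

/-- homogeneous case: with `n ≥ 3` identical strictly convex,
strictly increasing, differentiable costs `C` (`C 0 = 0`), the symmetric
allocation `q_i = d/n` is the unique PCE allocation (minimizer of `∑ C(q_i)` over
the simplex) and the unique ONE allocation (minimizer of `∑ D(q_i)` over
`{0 ≤ q_i < d/2, ∑ q_i = d}`), hence the total costs coincide; moreover the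
prices satisfy `p* = ((n−1)/(n−2)) p̄` where `p̄ = C'(d/n)` and
`p* = (1 + (d/n)/(d − 2d/n)) C'(d/n)`, and `(n−1)/(n−2) → 1` as `n → ∞`. -/
theorem stmt_17 (n : ℕ) (hn : 3 ≤ n) (d : ℝ) (hd : 0 < d) (C D : ℝ → ℝ)
    (hCdiff : Differentiable ℝ C)
    (hCconv : StrictConvexOn ℝ (Set.Ici 0) C)
    (hCmono : StrictMonoOn C (Set.Ici 0))
    (hC0 : C 0 = 0)
    (hD0 : D 0 = 0)
    (hD' : ∀ q ∈ Set.Ico 0 (d / 2),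
      HasDerivWithinAt D ((1 + q / (d - 2 * q)) * deriv C q) (Set.Ico 0 (d / 2)) q) :
    -- the symmetric allocation is the unique PCE allocation
    ((∀ q : Fin n → ℝ, (∀ i, 0 ≤ q i) → (∑ i, q i = d) →
        (q ≠ fun _ => d / n) → ∑ _i : Fin n, C (d / n) < ∑ i, C (q i)) ∧
    -- the symmetric allocation is the unique ONE allocation
      (∀ q : Fin n → ℝ, (∀ i, q i ∈ Set.Ico 0 (d / 2)) → (∑ i, q i = d) →
        (q ≠ fun _ => d / n) → ∑ _i : Fin n, D (d / n) < ∑ i, D (q i)) ∧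
    -- hence total costs at PCE and ONE coincide: C* = C̄ = n·C(d/n)
      (∑ _i : Fin n, C (d / n) = n * C (d / n)) ∧
    -- price relation p* = ((n−1)/(n−2)) p̄
      ((1 + (d / n) / (d - 2 * (d / n))) * deriv C (d / n) =
        ((n : ℝ) - 1) / ((n : ℝ) - 2) * deriv C (d / n)) ∧
    -- p*/p̄ → 1 as n → ∞
      Tendsto (fun m : ℕ => ((m : ℝ) - 1) / ((m : ℝ) - 2)) atTop (nhds 1)) := by
  have hn0 : 0 < n := by omega
  have hnR : (3:ℝ) ≤ (n:ℝ) := by exact_mod_cast hn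
  -- deriv C is strictly monotone on [0, ∞) and positive on (0, ∞)
  have hCderiv : StrictMonoOn (deriv C) (Set.Ici 0) :=
    hCconv.strictMonoOn_deriv (fun x _ => hCdiff x)
  have hCpos : ∀ x : ℝ, 0 < x → 0 < deriv C x := by
    intro x hx
    have h1 : slope C 0 x < deriv C x :=
      hCconv.slope_lt_deriv Set.self_mem_Ici (Set.mem_Ici.mpr hx.le) hx (hCdiff x)
    have h2 : 0 < slope C 0 x := by
      rw [slope_def_field]
      have hcx : C 0 < C x := hCmono Set.self_mem_Ici (Set.mem_Ici.mpr hx.le) hx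
      rw [hC0] at hcx
      have hnum : 0 < C x - C 0 := by rw [hC0]; linarith
      have hden0 : 0 < x - 0 := by linarith
      exact div_pos hnum hden0
    linarith
  -- D is strictly convex on [0, d/2)
  have hDconv : StrictConvexOn ℝ (Set.Ico 0 (d / 2)) D := by
    apply StrictMonoOn.strictConvexOn_of_deriv (convex_Ico _ _)
    · intro x hx
      exact (hD' x hx).continuousWithinAt
    · rw [interior_Ico]
      intro x hx y hy hxy
      have hxd : HasDerivAt D ((1 + x / (d - 2 * x)) * deriv C x) x :=
        (hD' x (Set.mem_Ico.mpr ⟨hx.1.le, hx.2⟩)).hasDerivAt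
          (Ico_mem_nhds hx.1 hx.2)
      have hyd : HasDerivAt D ((1 + y / (d - 2 * y)) * deriv C y) y :=
        (hD' y (Set.mem_Ico.mpr ⟨hy.1.le, hy.2⟩)).hasDerivAt
          (Ico_mem_nhds hy.1 hy.2)
      rw [hxd.deriv, hyd.deriv]
      have hdx : 0 < d - 2 * x := by
        have := hx.2; simp only [Set.mem_Ioo] at *; linarith
      have hdy : 0 < d - 2 * y := by
        have := hy.2; simp only [Set.mem_Ioo] at *; linarith
      have hgx : 0 < 1 + x / (d - 2 * x) := by
        have := div_nonneg hx.1.le hdx.le; linarith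
      have hg : x / (d - 2 * x) < y / (d - 2 * y) := by
        rw [div_lt_div_iff₀ hdx hdy]
        nlinarith [hx.1]
      have hCx : 0 < deriv C x := hCpos x hx.1
      have hCxy : deriv C x < deriv C y :=
        hCderiv (Set.mem_Ici.mpr hx.1.le) (Set.mem_Ici.mpr (hx.1.trans hxy).le) hxy
      nlinarith
  have hmem : d / (n : ℝ) ∈ Set.Ico 0 (d / 2) := by
    constructor
    · positivity
    · rw [div_lt_div_iff₀ (by exact_mod_cast hn0) (by norm_num)]
      nlinarith
  refine ⟨?_, ?_, ?_, ?_, ?_⟩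
  · intro q hq hsum hne
    exact jensen_unif hn0 hCconv q (fun i => Set.mem_Ici.mpr (hq i)) hsum hne
  · intro q hq hsum hne
    exact jensen_unif hn0 hDconv q hq hsum hne
  · simp [Finset.sum_const, mul_comm]
  · have hnne : (n:ℝ) ≠ 0 := by positivity
    have h2 : (n:ℝ) - 2 ≠ 0 := by
      intro h; nlinarith
    have hn2pos : 0 < (n:ℝ) - 2 := by linarith
    have hrw : d - 2 * (d / n) = d * ((n:ℝ) - 2) / n := by field_simp
    have key : (d / n) / (d - 2 * (d / n)) = 1 / ((n:ℝ) - 2) := by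
      rw [hrw]
      rw [div_div_div_eq, div_eq_div_iff (by positivity) (by positivity)]
      ring
    have : 1 + (d / n) / (d - 2 * (d / n)) = ((n:ℝ) - 1) / ((n:ℝ) - 2) := by
      rw [key]
      field_simp
      ring
    rw [this]
  · have h1 : Tendsto (fun m : ℕ => 1 + ((m:ℝ) - 2)⁻¹) atTop (nhds 1) := by
      have h2 : Tendsto (fun m : ℕ => ((m:ℝ) - 2)) atTop atTop :=
        tendsto_atTop_add_const_right _ (-2) tendsto_natCast_atTop_atTop
      have := (tendsto_inv_atTop_zero.comp h2).const_add (1:ℝ)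
      simpa using this
    apply h1.congr'
    filter_upwards [eventually_ge_atTop 3] with m hm
    have hm2 : ((m:ℝ)) - 2 ≠ 0 := by
      have : (3:ℝ) ≤ (m:ℝ) := by exact_mod_cast hm
      intro h; nlinarith
    field_simp
    ring
end
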